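/- Let (Ω, ℱ, P) be a probability space and 𝒜 ⊆ ℱ a sub-σ-algebra. Let x, x' be ℝ^d-valued, y, y' be ℝ^p-valued, and a be ℝ^m-valued square-integrable random vectors, all 𝒜-measurable. Let Z be a measurable space, let ζ¹, …, ζᵇ be i.i.d. Z-valued random elements independent of 𝒜, and let Φ : ℝ^d × ℝ^p × Z → ℝ^m be measurable such that ‖Φ(u₁, v₁, z) − Φ(u₂, v₂, z)‖² ≤ 2L² (‖u₁ − u₂‖² + ‖v₁ − v₂‖²) for all u₁, u₂, v₁, v₂ and all z, and such that Φ̄(u, v) = E[Φ(u, v, ζ¹)] exists for all (u, v). Define a' = a + (1/b) Σ_{i=1}^{b} ( Φ(x', y', ζⁱ) − Φ(x, y, ζⁱ) ). Then E‖a' − Φ̄(x', y')‖² ≤ E‖a − Φ̄(x, y)‖² + (2L²/b) E[ ‖x' − x‖² + ‖y' − y‖² ]. -/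

import Mathlib

set_option maxHeartbeats 1000000


open scoped RealInnerProductSpace
open MeasureTheory ProbabilityTheory

lemma my_indep_mono {Ω : Type*} {mΩ : MeasurableSpace Ω} {μ : Measure Ω}
    {m₁ m₂ m₁' m₂' : MeasurableSpace Ω} (h : Indep m₁ m₂ μ)
    (h1 : m₁' ≤ m₁) (h2 : m₂' ≤ m₂) : Indep m₁' m₂' μ := by
  rw [Indep_iff] at h ⊢
  exact fun t1 t2 ht1 ht2 => h t1 t2 (h1 _ ht1) (h2 _ ht2)

/-- One-step variance-reduction recursion (SARAH/SPIDER): with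
`x, x', y, y', a` square-integrable and `𝒜`-measurable, `ζ¹, …, ζᵇ` i.i.d. and (jointly
with `𝒜`) mutually independent, `Φ` measurable with the mean-square Lipschitz property,
`Φ̄(u,v) = E[Φ(u,v,ζ¹)]`, and
`a' = a + (1/b) Σᵢ (Φ(x',y',ζⁱ) − Φ(x,y,ζⁱ))`, one has
`E‖a' − Φ̄(x',y')‖² ≤ E‖a − Φ̄(x,y)‖² + (2L²/b) E[‖x'−x‖² + ‖y'−y‖²]`. -/
theorem stmt_15 {d p m : ℕ} {Ω : Type*} [mΩ : MeasurableSpace Ω]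
    (μP : Measure Ω) [IsProbabilityMeasure μP]
    {Z : Type*} [MeasurableSpace Z]
    (𝒜 : MeasurableSpace Ω) (h𝒜 : 𝒜 ≤ mΩ)
    (L : ℝ) (b : ℕ) (hb : 0 < b)
    (x x' : Ω → EuclideanSpace ℝ (Fin d)) (y y' : Ω → EuclideanSpace ℝ (Fin p))
    (a : Ω → EuclideanSpace ℝ (Fin m))
    (hxm : Measurable[𝒜] x) (hx'm : Measurable[𝒜] x')
    (hym : Measurable[𝒜] y) (hy'm : Measurable[𝒜] y')
    (ham : Measurable[𝒜] a)
    (hx2 : MemLp (m0 := mΩ) x 2 μP) (hx'2 : MemLp (m0 := mΩ) x' 2 μP)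
    (hy2 : MemLp (m0 := mΩ) y 2 μP) (hy'2 : MemLp (m0 := mΩ) y' 2 μP)
    (ha2 : MemLp (m0 := mΩ) a 2 μP)
    (ζ : Fin b → Ω → Z) (hζm : ∀ i, Measurable[mΩ] (ζ i))
    (hiid : ∀ i j, @IdentDistrib Ω Ω Z mΩ mΩ _ (ζ i) (ζ j) μP μP)
    (hindep : iIndep (fun j : Option (Fin b) =>
      j.elim 𝒜 (fun i => MeasurableSpace.comap (ζ i) inferInstance)) μP)
    (Φ : EuclideanSpace ℝ (Fin d) → EuclideanSpace ℝ (Fin p) → Z → EuclideanSpace ℝ (Fin m))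
    (hΦm : Measurable (fun q : (EuclideanSpace ℝ (Fin d) × EuclideanSpace ℝ (Fin p)) × Z =>
      Φ q.1.1 q.1.2 q.2))
    (hΦlip : ∀ u₁ u₂ v₁ v₂ z, ‖Φ u₁ v₁ z - Φ u₂ v₂ z‖ ^ 2
      ≤ 2 * L ^ 2 * (‖u₁ - u₂‖ ^ 2 + ‖v₁ - v₂‖ ^ 2))
    (hΦint : ∀ u v, Integrable (fun ω => Φ u v (ζ ⟨0, hb⟩ ω)) μP)
    (Φbar : EuclideanSpace ℝ (Fin d) → EuclideanSpace ℝ (Fin p) → EuclideanSpace ℝ (Fin m))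
    (hΦbar : ∀ u v, Φbar u v = ∫ ω, Φ u v (ζ ⟨0, hb⟩ ω) ∂μP)
    (a' : Ω → EuclideanSpace ℝ (Fin m))
    (ha' : ∀ ω, a' ω = a ω
      + (b : ℝ)⁻¹ • ∑ i : Fin b, (Φ (x' ω) (y' ω) (ζ i ω) - Φ (x ω) (y ω) (ζ i ω))) :
    ∫ ω, ‖a' ω - Φbar (x' ω) (y' ω)‖ ^ 2 ∂μP
      ≤ ∫ ω, ‖a ω - Φbar (x ω) (y ω)‖ ^ 2 ∂μP
        + (2 * L ^ 2 / b) * ∫ ω, (‖x' ω - x ω‖ ^ 2 + ‖y' ω - y ω‖ ^ 2) ∂μP := by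
  classical
  set W : Ω → (EuclideanSpace ℝ (Fin d) × EuclideanSpace ℝ (Fin d)) ×
      (EuclideanSpace ℝ (Fin p) × EuclideanSpace ℝ (Fin p)) × EuclideanSpace ℝ (Fin m) :=
    fun ω => ((x ω, x' ω), (y ω, y' ω), a ω) with hWdef
  have hW𝒜 : Measurable[𝒜] W :=
    ((hxm.prodMk hx'm).prodMk ((hym.prodMk hy'm).prodMk ham))
  have hWM : Measurable[mΩ] W := hW𝒜.mono h𝒜 le_rfl
  have hxM : Measurable[mΩ] x := hxm.mono h𝒜 le_rfl
  have hx'M : Measurable[mΩ] x' := hx'm.mono h𝒜 le_rfl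
  have hyM : Measurable[mΩ] y := hym.mono h𝒜 le_rfl
  have hy'M : Measurable[mΩ] y' := hy'm.mono h𝒜 le_rfl
  have haM : Measurable[mΩ] a := ham.mono h𝒜 le_rfl
  have hcomapW : MeasurableSpace.comap W inferInstance ≤ 𝒜 := measurable_iff_comap_le.mp hW𝒜
  -- independence of W and ζ i
  have hIndep1 : ∀ i, IndepFun W (ζ i) μP := by
    intro i
    have h := hindep.indep (i := (none : Option (Fin b))) (j := some i) (by simp)
    exact my_indep_mono h hcomapW le_rfl
  -- independence of (W, ζ i) and ζ j for i ≠ j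
  have hIndep2 : ∀ i j, i ≠ j → IndepFun (fun ω => (W ω, ζ i ω)) (ζ j) μP := by
    intro i j hij
    have h := indep_iSup_of_disjoint (m := fun k : Option (Fin b) =>
        k.elim 𝒜 (fun i => MeasurableSpace.comap (ζ i) inferInstance))
      (fun k => by cases k with
        | none => exact h𝒜
        | some i => exact measurable_iff_comap_le.mp (hζm i))
      hindep (S := {none, some i}) (T := {some j})
      (by simp [Set.disjoint_singleton_right, hij.symm])
    refine my_indep_mono h ?_ ?_
    · have h1 : MeasurableSpace.comap (fun ω => (W ω, ζ i ω)) inferInstance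
          = MeasurableSpace.comap W inferInstance ⊔ MeasurableSpace.comap (ζ i) inferInstance := by
        rw [show (inferInstance : MeasurableSpace
            (((EuclideanSpace ℝ (Fin d) × EuclideanSpace ℝ (Fin d)) ×
            (EuclideanSpace ℝ (Fin p) × EuclideanSpace ℝ (Fin p)) × EuclideanSpace ℝ (Fin m)) × Z))
            = MeasurableSpace.comap Prod.fst inferInstance
              ⊔ MeasurableSpace.comap Prod.snd inferInstance from rfl,
          MeasurableSpace.comap_sup, MeasurableSpace.comap_comp, MeasurableSpace.comap_comp]
        rfl
      rw [h1]
      refine sup_le ?_ ?_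
      · exact hcomapW.trans (le_biSup
          (f := fun k : Option (Fin b) => k.elim 𝒜
            (fun i => MeasurableSpace.comap (ζ i) inferInstance))
          (show (none : Option (Fin b)) ∈ ({none, some i} : Set (Option (Fin b))) by simp))
      · exact le_biSup
          (f := fun k : Option (Fin b) => k.elim 𝒜
            (fun i => MeasurableSpace.comap (ζ i) inferInstance))
          (show (some i) ∈ ({none, some i} : Set (Option (Fin b))) by simp)
    · exact le_biSup
          (f := fun k : Option (Fin b) => k.elim 𝒜
            (fun i => MeasurableSpace.comap (ζ i) inferInstance))
          (show (some j) ∈ ({some j} : Set (Option (Fin b))) by simp)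
  clear hW𝒜 hxm hx'm hym hy'm ham hindep h𝒜 hcomapW
  clear 𝒜
  -- distribution identities
  set ν : Measure Z := @Measure.map Ω Z mΩ _ (ζ ⟨0, hb⟩) μP with hνdef
  have hνprob : IsProbabilityMeasure ν := Measure.isProbabilityMeasure_map (hζm _).aemeasurable
  have hmap : ∀ i, μP.map (ζ i) = ν := fun i => (hiid i ⟨0, hb⟩).map_eq
  set μW := μP.map W with hμWdef
  have hμWprob : IsProbabilityMeasure μW := Measure.isProbabilityMeasure_map hWM.aemeasurable
  have hpair : ∀ i, μP.map (fun ω => (W ω, ζ i ω)) = μW.prod ν := by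
    intro i
    rw [hμWdef, ← hmap i]
    exact (indepFun_iff_map_prod_eq_prod_map_map hWM.aemeasurable (hζm i).aemeasurable).mp
      (hIndep1 i)
  have htriple : ∀ i j, i ≠ j →
      μP.map (fun ω => ((W ω, ζ i ω), ζ j ω)) = (μW.prod ν).prod ν := by
    intro i j hij
    rw [← hpair i, ← hmap j]
    exact (indepFun_iff_map_prod_eq_prod_map_map (hWM.prodMk (hζm i)).aemeasurable
      (hζm j).aemeasurable).mp (hIndep2 i j hij)
  -- Φ basics
  have hΦz : ∀ u v, Measurable (fun z => Φ u v z) :=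
    fun u v => hΦm.comp (show Measurable fun z : Z =>
      ((((u, v) : EuclideanSpace ℝ (Fin d) × EuclideanSpace ℝ (Fin p)), z)) from
      measurable_const.prodMk measurable_id)
  have hΦν : ∀ u v, Integrable (fun z => Φ u v z) ν := by
    intro u v
    rw [hνdef, integrable_map_measure (hΦz u v).aestronglyMeasurable (hζm _).aemeasurable]
    exact hΦint u v
  have hΦbarν : ∀ u v, Φbar u v = ∫ z, Φ u v z ∂ν := by
    intro u v
    rw [hΦbar, hνdef, integral_map (hζm _).aemeasurable (hΦz u v).aestronglyMeasurable]
  have hΦbarM : Measurable (fun uv : EuclideanSpace ℝ (Fin d) × EuclideanSpace ℝ (Fin p) =>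
      Φbar uv.1 uv.2) := by
    have he : (fun uv : EuclideanSpace ℝ (Fin d) × EuclideanSpace ℝ (Fin p) => Φbar uv.1 uv.2)
        = fun uv => ∫ z, Φ uv.1 uv.2 z ∂ν := by
      funext uv; exact hΦbarν _ _
    rw [he]
    exact (hΦm.stronglyMeasurable.integral_prod_right').measurable
  -- the key auxiliary functions on the product space
  set ξf : ((EuclideanSpace ℝ (Fin d) × EuclideanSpace ℝ (Fin d)) ×
      (EuclideanSpace ℝ (Fin p) × EuclideanSpace ℝ (Fin p)) × EuclideanSpace ℝ (Fin m)) → Z →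
      EuclideanSpace ℝ (Fin m) :=
    fun w z => Φ w.1.2 w.2.1.2 z - Φ w.1.1 w.2.1.1 z with hξfdef
  set gf : ((EuclideanSpace ℝ (Fin d) × EuclideanSpace ℝ (Fin d)) ×
      (EuclideanSpace ℝ (Fin p) × EuclideanSpace ℝ (Fin p)) × EuclideanSpace ℝ (Fin m)) →
      EuclideanSpace ℝ (Fin m) :=
    fun w => Φbar w.1.2 w.2.1.2 - Φbar w.1.1 w.2.1.1 with hgfdef
  set Af : ((EuclideanSpace ℝ (Fin d) × EuclideanSpace ℝ (Fin d)) ×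
      (EuclideanSpace ℝ (Fin p) × EuclideanSpace ℝ (Fin p)) × EuclideanSpace ℝ (Fin m)) →
      EuclideanSpace ℝ (Fin m) :=
    fun w => w.2.2 - Φbar w.1.1 w.2.1.1 with hAfdef
  set cf : ((EuclideanSpace ℝ (Fin d) × EuclideanSpace ℝ (Fin d)) ×
      (EuclideanSpace ℝ (Fin p) × EuclideanSpace ℝ (Fin p)) × EuclideanSpace ℝ (Fin m)) → ℝ :=
    fun w => ‖w.1.2 - w.1.1‖ ^ 2 + ‖w.2.1.2 - w.2.1.1‖ ^ 2 with hcfdef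
  -- measurability of the auxiliary functions
  have hξfM : Measurable (fun q : ((EuclideanSpace ℝ (Fin d) × EuclideanSpace ℝ (Fin d)) ×
      (EuclideanSpace ℝ (Fin p) × EuclideanSpace ℝ (Fin p)) × EuclideanSpace ℝ (Fin m)) × Z =>
      ξf q.1 q.2) := by
    apply Measurable.sub
    · exact hΦm.comp (((measurable_fst.comp measurable_fst).snd.prodMk
        ((measurable_fst.comp (measurable_snd.comp measurable_fst)).snd)).prodMk measurable_snd)
    · exact hΦm.comp (((measurable_fst.comp measurable_fst).fst.prodMk
        ((measurable_fst.comp (measurable_snd.comp measurable_fst)).fst)).prodMk measurable_snd)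
  have hgfM : Measurable gf := by
    apply Measurable.sub
    · exact hΦbarM.comp ((measurable_fst.snd).prodMk
        ((measurable_fst.comp measurable_snd).snd))
    · exact hΦbarM.comp ((measurable_fst.fst).prodMk
        ((measurable_fst.comp measurable_snd).fst))
  have hAfM : Measurable Af :=
    (measurable_snd.comp measurable_snd).sub
      (hΦbarM.comp ((measurable_fst.fst).prodMk ((measurable_fst.comp measurable_snd).fst)))
  have hcfM : Measurable cf :=
    (((measurable_fst.snd).sub (measurable_fst.fst)).norm.pow_const 2).add
      ((((measurable_fst.comp measurable_snd).snd).sub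
        ((measurable_fst.comp measurable_snd).fst)).norm.pow_const 2)
  -- pointwise bounds
  have hcf0 : ∀ w', 0 ≤ cf w' := fun w' => by
    rw [hcfdef]; positivity
  have hbd : ∀ w' z, ‖ξf w' z‖ ^ 2 ≤ 2 * L ^ 2 * cf w' := fun w' z => hΦlip _ _ _ _ z
  have hbd' : ∀ w' z, ‖ξf w' z‖ ≤ Real.sqrt (2 * L ^ 2 * cf w') := by
    intro w' z
    rw [show ‖ξf w' z‖ = Real.sqrt (‖ξf w' z‖ ^ 2) from (Real.sqrt_sq (norm_nonneg _)).symm]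
    exact Real.sqrt_le_sqrt (hbd w' z)
  have hIν : ∀ w', Integrable (fun z => ξf w' z) ν := fun w' => (hΦν _ _).sub (hΦν _ _)
  have hI : ∀ w', ∫ z, ξf w' z ∂ν = gf w' := by
    intro w'
    rw [show (fun z => ξf w' z) = fun z => Φ w'.1.2 w'.2.1.2 z - Φ w'.1.1 w'.2.1.1 z from rfl,
      integral_sub (hΦν _ _) (hΦν _ _), ← hΦbarν, ← hΦbarν]
  have hgbd : ∀ w', ‖gf w'‖ ≤ Real.sqrt (2 * L ^ 2 * cf w') := by
    intro w'
    rw [← hI w']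
    refine (norm_integral_le_integral_norm _).trans ?_
    have h2 := integral_mono_of_nonneg (μ := ν) (ae_of_all _ fun z => norm_nonneg (ξf w' z))
      (integrable_const (Real.sqrt (2 * L ^ 2 * cf w'))) (ae_of_all _ (hbd' w'))
    simpa using h2
  -- measurability over Ω
  have hWpairM : ∀ i, Measurable (fun ω => (W ω, ζ i ω)) := fun i => hWM.prodMk (hζm i)
  have hξΩM : ∀ i, Measurable (fun ω => ξf (W ω) (ζ i ω)) := fun i => hξfM.comp (hWpairM i)
  have hgΩM : Measurable (fun ω => gf (W ω)) := hgfM.comp hWM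
  have hAΩM : Measurable (fun ω => Af (W ω)) := hAfM.comp hWM
  have hcΩM : Measurable (fun ω => cf (W ω)) := hcfM.comp hWM
  -- integrability of cf ∘ W
  have hxx2 : MemLp (fun ω => x' ω - x ω) 2 μP := hx'2.sub hx2
  have hyy2 : MemLp (fun ω => y' ω - y ω) 2 μP := hy'2.sub hy2
  have h1 : Integrable (fun ω => ‖x' ω - x ω‖ ^ 2) μP :=
    (memLp_two_iff_integrable_sq hxx2.aestronglyMeasurable.norm).mp hxx2.norm
  have h2 : Integrable (fun ω => ‖y' ω - y ω‖ ^ 2) μP :=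
    (memLp_two_iff_integrable_sq hyy2.aestronglyMeasurable.norm).mp hyy2.norm
  have h1x : Integrable (fun ω => ‖x ω‖ ^ 2) μP :=
    (memLp_two_iff_integrable_sq hx2.aestronglyMeasurable.norm).mp hx2.norm
  have h1y : Integrable (fun ω => ‖y ω‖ ^ 2) μP :=
    (memLp_two_iff_integrable_sq hy2.aestronglyMeasurable.norm).mp hy2.norm
  have hcint : Integrable (fun ω => cf (W ω)) μP := h1.add h2
  -- membership in L² of sqrt-type dominating functions
  have hsqrtMem : ∀ h : Ω → ℝ, Measurable h → Integrable h μP → (∀ ω, 0 ≤ h ω) →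
      MemLp (fun ω => Real.sqrt (2 * L ^ 2 * h ω)) 2 μP := by
    intro h hM hInt h0
    refine (memLp_two_iff_integrable_sq ((hM.const_mul _).sqrt.aestronglyMeasurable)).mpr ?_
    have he : (fun ω => Real.sqrt (2 * L ^ 2 * h ω) ^ 2) = fun ω => 2 * L ^ 2 * h ω := by
      funext ω
      rw [Real.sq_sqrt (by have := h0 ω; positivity)]
    rw [he]
    exact hInt.const_mul _
  have hsq : MemLp (fun ω => Real.sqrt (2 * L ^ 2 * cf (W ω))) 2 μP :=
    hsqrtMem _ hcΩM hcint (fun ω => hcf0 _)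
  have hξ2 : ∀ i, MemLp (fun ω => ξf (W ω) (ζ i ω)) 2 μP := by
    intro i
    refine MemLp.of_le hsq (hξΩM i).aestronglyMeasurable (ae_of_all _ fun ω => ?_)
    rw [Real.norm_eq_abs, abs_of_nonneg (Real.sqrt_nonneg _)]
    exact hbd' (W ω) (ζ i ω)
  have hg2 : MemLp (fun ω => gf (W ω)) 2 μP := by
    refine MemLp.of_le hsq hgΩM.aestronglyMeasurable (ae_of_all _ fun ω => ?_)
    rw [Real.norm_eq_abs, abs_of_nonneg (Real.sqrt_nonneg _)]
    exact hgbd (W ω)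
  -- Φbar ∘ (x, y) is in L²
  have hΦbar00 : ∀ u v, ‖Φbar u v - Φbar 0 0‖ ≤ Real.sqrt (2 * L ^ 2 * (‖u‖ ^ 2 + ‖v‖ ^ 2)) := by
    intro u v
    rw [hΦbarν u v, hΦbarν 0 0, ← integral_sub (hΦν _ _) (hΦν _ _)]
    refine (norm_integral_le_integral_norm _).trans ?_
    have hptw : ∀ z, ‖Φ u v z - Φ 0 0 z‖ ≤ Real.sqrt (2 * L ^ 2 * (‖u‖ ^ 2 + ‖v‖ ^ 2)) := by
      intro z
      rw [show ‖Φ u v z - Φ 0 0 z‖ = Real.sqrt (‖Φ u v z - Φ 0 0 z‖ ^ 2) from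
        (Real.sqrt_sq (norm_nonneg _)).symm]
      refine Real.sqrt_le_sqrt ?_
      simpa using hΦlip u 0 v 0 z
    have h3 := integral_mono_of_nonneg (μ := ν) (ae_of_all _ fun z => norm_nonneg _)
      (integrable_const (Real.sqrt (2 * L ^ 2 * (‖u‖ ^ 2 + ‖v‖ ^ 2)))) (ae_of_all _ hptw)
    simpa using h3
  have hΦxy2 : MemLp (fun ω => Φbar (x ω) (y ω)) 2 μP := by
    have hdom : MemLp (fun ω => ‖Φbar 0 0‖
        + Real.sqrt (2 * L ^ 2 * (‖x ω‖ ^ 2 + ‖y ω‖ ^ 2))) 2 μP :=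
      by
        have hh := (memLp_const (μ := μP) (p := 2) ‖Φbar 0 0‖).add
          (hsqrtMem (fun ω => ‖x ω‖ ^ 2 + ‖y ω‖ ^ 2)
          ((hxM.norm.pow_const 2).add (hyM.norm.pow_const 2))
          (h1x.add h1y) (fun ω => by positivity))
        exact hh
    refine MemLp.of_le hdom (hΦbarM.comp (hxM.prodMk hyM)).aestronglyMeasurable
      (ae_of_all _ fun ω => ?_)
    rw [Real.norm_eq_abs, abs_of_nonneg (by positivity)]
    calc ‖Φbar (x ω) (y ω)‖ = ‖Φbar 0 0 + (Φbar (x ω) (y ω) - Φbar 0 0)‖ := by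
          rw [add_sub_cancel]
      _ ≤ ‖Φbar 0 0‖ + ‖Φbar (x ω) (y ω) - Φbar 0 0‖ := norm_add_le _ _
      _ ≤ _ := add_le_add le_rfl (hΦbar00 _ _)
  have hA2 : MemLp (fun ω => Af (W ω)) 2 μP := ha2.sub hΦxy2
  have hη2 : ∀ i, MemLp (fun ω => ξf (W ω) (ζ i ω) - gf (W ω)) 2 μP :=
    fun i => (hξ2 i).sub hg2
  -- inner products of L² functions are integrable
  have hinner : ∀ f g : Ω → EuclideanSpace ℝ (Fin m), MemLp f 2 μP → MemLp g 2 μP →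
      Integrable (fun ω => ⟪f ω, g ω⟫) μP := by
    intro f g hf hg
    have hf2 : Integrable (fun ω => ‖f ω‖ ^ 2) μP :=
      (memLp_two_iff_integrable_sq hf.aestronglyMeasurable.norm).mp hf.norm
    have hg2' : Integrable (fun ω => ‖g ω‖ ^ 2) μP :=
      (memLp_two_iff_integrable_sq hg.aestronglyMeasurable.norm).mp hg.norm
    refine Integrable.mono' ((hf2.add hg2').const_mul (1 / 2 : ℝ))
      (hf.aestronglyMeasurable.inner hg.aestronglyMeasurable) (ae_of_all _ fun ω => ?_)
    rw [Real.norm_eq_abs]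
    calc |⟪f ω, g ω⟫| ≤ ‖f ω‖ * ‖g ω‖ := abs_real_inner_le_norm _ _
      _ ≤ 1 / 2 * (‖f ω‖ ^ 2 + ‖g ω‖ ^ 2) := by nlinarith [sq_nonneg (‖f ω‖ - ‖g ω‖)]
  -- Fubini transfer lemmas
  have hFub1 : ∀ (i : Fin b) (F : (((EuclideanSpace ℝ (Fin d) × EuclideanSpace ℝ (Fin d)) ×
      (EuclideanSpace ℝ (Fin p) × EuclideanSpace ℝ (Fin p)) × EuclideanSpace ℝ (Fin m)) × Z) → ℝ),
      Measurable F → Integrable (fun ω => F (W ω, ζ i ω)) μP →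
      ∫ ω, F (W ω, ζ i ω) ∂μP = ∫ w, ∫ z, F (w, z) ∂ν ∂μW := by
    intro i F hFM hFint
    have h4 : Integrable F (μW.prod ν) := by
      rw [← hpair i]
      exact (integrable_map_measure hFM.aestronglyMeasurable (hWpairM i).aemeasurable).mpr hFint
    rw [show ∫ ω, F (W ω, ζ i ω) ∂μP = ∫ q, F q ∂(μP.map (fun ω => (W ω, ζ i ω))) from
      (integral_map (hWpairM i).aemeasurable hFM.aestronglyMeasurable).symm, hpair i,
      MeasureTheory.integral_prod _ h4]
  have hFub2 : ∀ (i j : Fin b), i ≠ j →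
      ∀ F : ((((EuclideanSpace ℝ (Fin d) × EuclideanSpace ℝ (Fin d)) ×
      (EuclideanSpace ℝ (Fin p) × EuclideanSpace ℝ (Fin p)) × EuclideanSpace ℝ (Fin m)) × Z) × Z)
      → ℝ,
      Measurable F → Integrable (fun ω => F ((W ω, ζ i ω), ζ j ω)) μP →
      ∫ ω, F ((W ω, ζ i ω), ζ j ω) ∂μP = ∫ q, ∫ z, F (q, z) ∂ν ∂(μW.prod ν) := by
    intro i j hij F hFM hFint
    have hpm : Measurable (fun ω => ((W ω, ζ i ω), ζ j ω)) := (hWpairM i).prodMk (hζm j)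
    have h4 : Integrable F ((μW.prod ν).prod ν) := by
      rw [← htriple i j hij]
      exact (integrable_map_measure hFM.aestronglyMeasurable hpm.aemeasurable).mpr hFint
    rw [show ∫ ω, F ((W ω, ζ i ω), ζ j ω) ∂μP
        = ∫ q, F q ∂(μP.map (fun ω => ((W ω, ζ i ω), ζ j ω))) from
      (integral_map hpm.aemeasurable hFM.aestronglyMeasurable).symm, htriple i j hij,
      MeasureTheory.integral_prod _ h4]
  -- measurability of fixed-w slices
  have hξwM : ∀ w', Measurable (fun z => ξf w' z) := by
    intro w'
    exact hξfM.comp (show Measurable fun z : Z => (w', z) from measurable_const.prodMk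
      measurable_id)
  -- Fact 1 : cross term with A vanishes
  have hfact1 : ∀ i, ∫ ω, ⟪Af (W ω), ξf (W ω) (ζ i ω) - gf (W ω)⟫ ∂μP = 0 := by
    intro i
    have hFM : Measurable (fun q : (((EuclideanSpace ℝ (Fin d) × EuclideanSpace ℝ (Fin d)) ×
        (EuclideanSpace ℝ (Fin p) × EuclideanSpace ℝ (Fin p)) × EuclideanSpace ℝ (Fin m)) × Z) =>
        ⟪Af q.1, ξf q.1 q.2 - gf q.1⟫) :=
      (hAfM.comp measurable_fst).inner (hξfM.sub (hgfM.comp measurable_fst))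
    have hFint : Integrable (fun ω => ⟪Af (W ω), ξf (W ω) (ζ i ω) - gf (W ω)⟫) μP :=
      hinner _ _ hA2 (hη2 i)
    rw [hFub1 i _ hFM hFint]
    have hz : ∀ w', (∫ z, ⟪Af w', ξf w' z - gf w'⟫ ∂ν) = 0 := by
      intro w'
      have hsub : Integrable (fun z => ξf w' z - gf w') ν := (hIν w').sub (integrable_const _)
      rw [integral_inner hsub, integral_sub (hIν w') (integrable_const _), hI w',
        integral_const, probReal_univ, one_smul, sub_self, inner_zero_right]
    simp only [hz, integral_zero]
  -- Fact 2 : cross terms between distinct samples vanish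
  have hfact2 : ∀ i j, i ≠ j →
      ∫ ω, ⟪ξf (W ω) (ζ i ω) - gf (W ω), ξf (W ω) (ζ j ω) - gf (W ω)⟫ ∂μP = 0 := by
    intro i j hij
    have hFM : Measurable (fun q : ((((EuclideanSpace ℝ (Fin d) × EuclideanSpace ℝ (Fin d)) ×
        (EuclideanSpace ℝ (Fin p) × EuclideanSpace ℝ (Fin p)) × EuclideanSpace ℝ (Fin m)) × Z) × Z)
        => ⟪ξf q.1.1 q.1.2 - gf q.1.1, ξf q.1.1 q.2 - gf q.1.1⟫) := by
      refine Measurable.inner ?_ ?_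
      · exact (hξfM.comp measurable_fst).sub (hgfM.comp (measurable_fst.comp measurable_fst))
      · exact (hξfM.comp ((measurable_fst.comp measurable_fst).prodMk measurable_snd)).sub
          (hgfM.comp (measurable_fst.comp measurable_fst))
    have hFint : Integrable
        (fun ω => ⟪ξf (W ω) (ζ i ω) - gf (W ω), ξf (W ω) (ζ j ω) - gf (W ω)⟫) μP :=
      hinner _ _ (hη2 i) (hη2 j)
    rw [hFub2 i j hij _ hFM hFint]
    have hz : ∀ q : (((EuclideanSpace ℝ (Fin d) × EuclideanSpace ℝ (Fin d)) ×
        (EuclideanSpace ℝ (Fin p) × EuclideanSpace ℝ (Fin p)) × EuclideanSpace ℝ (Fin m)) × Z),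
        (∫ z, ⟪ξf q.1 q.2 - gf q.1, ξf q.1 z - gf q.1⟫ ∂ν) = 0 := by
      intro q
      have hsub : Integrable (fun z => ξf q.1 z - gf q.1) ν := (hIν q.1).sub (integrable_const _)
      rw [integral_inner hsub, integral_sub (hIν q.1) (integrable_const _), hI q.1,
        integral_const, probReal_univ, one_smul, sub_self, inner_zero_right]
    simp only [hz, integral_zero]
  -- Fact 3 : second moment of each centred sample
  have hfact3 : ∀ i, ∫ ω, ‖ξf (W ω) (ζ i ω) - gf (W ω)‖ ^ 2 ∂μP
      ≤ 2 * L ^ 2 * ∫ ω, cf (W ω) ∂μP := by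
    intro i
    have hFM : Measurable (fun q : (((EuclideanSpace ℝ (Fin d) × EuclideanSpace ℝ (Fin d)) ×
        (EuclideanSpace ℝ (Fin p) × EuclideanSpace ℝ (Fin p)) × EuclideanSpace ℝ (Fin m)) × Z) =>
        ‖ξf q.1 q.2 - gf q.1‖ ^ 2) :=
      ((hξfM.sub (hgfM.comp measurable_fst)).norm.pow_const 2)
    have hFint : Integrable (fun ω => ‖ξf (W ω) (ζ i ω) - gf (W ω)‖ ^ 2) μP :=
      (memLp_two_iff_integrable_sq (hη2 i).aestronglyMeasurable.norm).mp (hη2 i).norm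
    rw [hFub1 i _ hFM hFint]
    have hwle : ∀ w', (∫ z, ‖ξf w' z - gf w'‖ ^ 2 ∂ν) ≤ 2 * L ^ 2 * cf w' := by
      intro w'
      have hξsq : Integrable (fun z => ‖ξf w' z‖ ^ 2) ν := by
        refine Integrable.mono' (integrable_const (2 * L ^ 2 * cf w'))
          (((hξwM w').norm.pow_const 2).aestronglyMeasurable) (ae_of_all _ fun z => ?_)
        rw [Real.norm_eq_abs, abs_of_nonneg (by positivity)]
        exact hbd w' z
      have hinn_int : Integrable (fun z => ⟪gf w', ξf w' z⟫) ν := by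
        refine Integrable.mono' ((hIν w').norm.const_mul ‖gf w'‖)
          ((measurable_const.inner (hξwM w')).aestronglyMeasurable) (ae_of_all _ fun z => ?_)
        rw [Real.norm_eq_abs]
        exact abs_real_inner_le_norm _ _
      have hinnerz : ∫ z, ⟪gf w', ξf w' z⟫ ∂ν = ‖gf w'‖ ^ 2 := by
        rw [integral_inner (hIν w'), hI w', real_inner_self_eq_norm_sq]
      have hexp : (fun z => ‖ξf w' z - gf w'‖ ^ 2)
          = fun z => ‖ξf w' z‖ ^ 2 - 2 * ⟪gf w', ξf w' z⟫ + ‖gf w'‖ ^ 2 := by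
        funext z
        rw [norm_sub_sq_real, real_inner_comm]
      have hintle : ∫ z, ‖ξf w' z‖ ^ 2 ∂ν ≤ 2 * L ^ 2 * cf w' := by
        have h5 := integral_mono_of_nonneg (μ := ν) (ae_of_all _ fun z => by positivity)
          (integrable_const (2 * L ^ 2 * cf w')) (ae_of_all _ (hbd w'))
        simpa using h5
      have hmul : Integrable (fun z => 2 * ⟪gf w', ξf w' z⟫) ν := hinn_int.const_mul 2
      have hsub2 : Integrable (fun z => ‖ξf w' z‖ ^ 2 - 2 * ⟪gf w', ξf w' z⟫) ν :=
        hξsq.sub hmul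
      rw [hexp, integral_add hsub2 (integrable_const _), integral_sub hξsq hmul,
        integral_const_mul, hinnerz, integral_const, probReal_univ, one_smul]
      nlinarith [sq_nonneg ‖gf w'‖]
    have hRHSint : Integrable (fun w' => 2 * L ^ 2 * cf w') μW := by
      rw [hμWdef]
      refine (integrable_map_measure (hcfM.const_mul (2 * L ^ 2)).aestronglyMeasurable
        hWM.aemeasurable).mpr ?_
      exact hcint.const_mul _
    calc ∫ w', (∫ z, ‖ξf w' z - gf w'‖ ^ 2 ∂ν) ∂μW
        ≤ ∫ w', 2 * L ^ 2 * cf w' ∂μW := by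
          refine integral_mono_of_nonneg (ae_of_all _ fun w' => ?_) hRHSint
            (ae_of_all _ hwle)
          exact integral_nonneg fun z => by positivity
      _ = 2 * L ^ 2 * ∫ ω, cf (W ω) ∂μP := by
          rw [hμWdef, integral_map hWM.aemeasurable
            (hcfM.const_mul (2 * L ^ 2)).aestronglyMeasurable]
          exact integral_const_mul _ _
  -- final assembly
  have hbne : (b : ℝ) ≠ 0 := Nat.cast_ne_zero.mpr hb.ne'
  set T : Ω → EuclideanSpace ℝ (Fin m) :=
    fun ω => ∑ i : Fin b, (ξf (W ω) (ζ i ω) - gf (W ω)) with hTdef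
  set K := ∫ ω, cf (W ω) ∂μP with hKdef
  -- pointwise decomposition
  have hS : ∀ ω, a' ω - Φbar (x' ω) (y' ω) = Af (W ω) + (b : ℝ)⁻¹ • T ω := by
    intro ω
    have h6 : T ω = (∑ i : Fin b, ξf (W ω) (ζ i ω)) - (b : ℝ) • gf (W ω) := by
      simp only [hTdef]
      rw [Finset.sum_sub_distrib, Finset.sum_const, Finset.card_univ, Fintype.card_fin,
        ← Nat.cast_smul_eq_nsmul ℝ]
    rw [ha' ω, h6, smul_sub, smul_smul, inv_mul_cancel₀ hbne, one_smul]
    simp only [hξfdef, hgfdef, hAfdef, hWdef]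
    abel
  -- pointwise expansion of the square
  have hsq' : ∀ ω, ‖a' ω - Φbar (x' ω) (y' ω)‖ ^ 2
      = ‖Af (W ω)‖ ^ 2 + (2 * (b : ℝ)⁻¹) * ⟪Af (W ω), T ω⟫
        + (b : ℝ)⁻¹ ^ 2 * ‖T ω‖ ^ 2 := by
    intro ω
    rw [hS ω, norm_add_sq_real, real_inner_smul_right, norm_smul, mul_pow, Real.norm_eq_abs,
      sq_abs]
    ring
  -- the inner-product cross term
  have hAT : (fun ω => ⟪Af (W ω), T ω⟫)
      = fun ω => ∑ i : Fin b, ⟪Af (W ω), ξf (W ω) (ζ i ω) - gf (W ω)⟫ := by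
    funext ω
    simp only [hTdef]
    rw [inner_sum]
  have hATint : Integrable (fun ω => ⟪Af (W ω), T ω⟫) μP := by
    rw [hAT]
    exact integrable_finset_sum _ fun i _ => hinner _ _ hA2 (hη2 i)
  have hATzero : ∫ ω, ⟪Af (W ω), T ω⟫ ∂μP = 0 := by
    rw [hAT, integral_finset_sum _ fun i _ => hinner _ _ hA2 (hη2 i)]
    exact Finset.sum_eq_zero fun i _ => hfact1 i
  -- the quadratic term
  have hTT : (fun ω => ‖T ω‖ ^ 2)
      = fun ω => ∑ i : Fin b, ∑ j : Fin b,
        ⟪ξf (W ω) (ζ i ω) - gf (W ω), ξf (W ω) (ζ j ω) - gf (W ω)⟫ := by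
    funext ω
    rw [← real_inner_self_eq_norm_sq]
    simp only [hTdef, sum_inner, inner_sum]
    exact Finset.sum_comm
  have hTTint : Integrable (fun ω => ‖T ω‖ ^ 2) μP := by
    rw [hTT]
    exact integrable_finset_sum _ fun i _ =>
      integrable_finset_sum _ fun j _ => hinner _ _ (hη2 i) (hη2 j)
  have hTTbound : ∫ ω, ‖T ω‖ ^ 2 ∂μP ≤ (b : ℝ) * (2 * L ^ 2 * K) := by
    rw [hTT, integral_finset_sum _ fun i _ =>
      integrable_finset_sum _ fun j _ => hinner _ _ (hη2 i) (hη2 j)]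
    have hrow : ∀ i : Fin b, (∫ ω, ∑ j : Fin b,
        ⟪ξf (W ω) (ζ i ω) - gf (W ω), ξf (W ω) (ζ j ω) - gf (W ω)⟫ ∂μP)
        ≤ 2 * L ^ 2 * K := by
      intro i
      rw [integral_finset_sum _ fun j _ => hinner _ _ (hη2 i) (hη2 j)]
      rw [Finset.sum_eq_single_of_mem i (Finset.mem_univ i)
        (fun j _ hji => hfact2 i j (Ne.symm hji))]
      have heq : (fun ω => ⟪ξf (W ω) (ζ i ω) - gf (W ω), ξf (W ω) (ζ i ω) - gf (W ω)⟫)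
          = fun ω => ‖ξf (W ω) (ζ i ω) - gf (W ω)‖ ^ 2 := by
        funext ω
        rw [real_inner_self_eq_norm_sq]
      rw [heq]
      exact hfact3 i
    calc (∑ i : Fin b, ∫ ω, ∑ j : Fin b,
          ⟪ξf (W ω) (ζ i ω) - gf (W ω), ξf (W ω) (ζ j ω) - gf (W ω)⟫ ∂μP)
        ≤ ∑ _i : Fin b, 2 * L ^ 2 * K := Finset.sum_le_sum fun i _ => hrow i
      _ = (b : ℝ) * (2 * L ^ 2 * K) := by
          rw [Finset.sum_const, Finset.card_univ, Fintype.card_fin, nsmul_eq_mul]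
  -- integrability of the expanded square
  have hAsq : Integrable (fun ω => ‖Af (W ω)‖ ^ 2) μP :=
    (memLp_two_iff_integrable_sq hA2.aestronglyMeasurable.norm).mp hA2.norm
  have hATc : Integrable (fun ω => (2 * (b : ℝ)⁻¹) * ⟪Af (W ω), T ω⟫) μP :=
    hATint.const_mul _
  have hTTc : Integrable (fun ω => (b : ℝ)⁻¹ ^ 2 * ‖T ω‖ ^ 2) μP := hTTint.const_mul _
  have hf1 : Integrable (fun ω => ‖Af (W ω)‖ ^ 2
      + (2 * (b : ℝ)⁻¹) * ⟪Af (W ω), T ω⟫) μP := hAsq.add hATc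
  -- split the integral
  have hLHS : ∫ ω, ‖a' ω - Φbar (x' ω) (y' ω)‖ ^ 2 ∂μP
      = ∫ ω, (‖Af (W ω)‖ ^ 2 + (2 * (b : ℝ)⁻¹) * ⟪Af (W ω), T ω⟫
        + (b : ℝ)⁻¹ ^ 2 * ‖T ω‖ ^ 2) ∂μP :=
    integral_congr_ae (ae_of_all _ fun ω => hsq' ω)
  have hsplit : ∫ ω, (‖Af (W ω)‖ ^ 2 + (2 * (b : ℝ)⁻¹) * ⟪Af (W ω), T ω⟫
        + (b : ℝ)⁻¹ ^ 2 * ‖T ω‖ ^ 2) ∂μP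
      = ∫ ω, ‖Af (W ω)‖ ^ 2 ∂μP
        + (2 * (b : ℝ)⁻¹) * ∫ ω, ⟪Af (W ω), T ω⟫ ∂μP
        + (b : ℝ)⁻¹ ^ 2 * ∫ ω, ‖T ω‖ ^ 2 ∂μP := by
    rw [integral_add hf1 hTTc, integral_add hAsq hATc, integral_const_mul, integral_const_mul]
  -- identify the goal integrals
  have hgoalA : ∫ ω, ‖a ω - Φbar (x ω) (y ω)‖ ^ 2 ∂μP = ∫ ω, ‖Af (W ω)‖ ^ 2 ∂μP := rfl
  rw [hgoalA, hLHS, hsplit, hATzero, mul_zero, add_zero]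
  have hmono : (b : ℝ)⁻¹ ^ 2 * ∫ ω, ‖T ω‖ ^ 2 ∂μP
      ≤ (b : ℝ)⁻¹ ^ 2 * ((b : ℝ) * (2 * L ^ 2 * K)) :=
    mul_le_mul_of_nonneg_left hTTbound (by positivity)
  refine (add_le_add le_rfl hmono).trans (le_of_eq ?_)
  field_simp
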